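/- arXiv:1812.03514 — 3 statements merged into one kernel-verified Lean document; each statement's English description precedes it below -/
import Mathlib

section
/- The Halphen system is covariant under Möbius transformations: let A_1, A_2, A_3 be differentiable complex (or real) functions of μ satisfying dA_j/dμ = −A_k A_l + A_j(A_k + A_l) for every permutation (j,k,l) of (1,2,3). Let a,b,c,d be constants with ad − bc = 1, and set μ̃ = (aμ+b)/(cμ+d). Then the functions Ã_j defined by Ã_j(μ̃) = (cμ+d)² A_j(μ) + c(cμ+d) satisfy the same Halphen system in the variable μ̃: dÃ_j/dμ̃ = −Ã_k Ã_l + Ã_j(Ã_k + Ã_l). -/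
/-- Möbius covariance of the Halphen system: if `A j` solve
`dA_j/dμ = −A_k A_l + A_j(A_k + A_l)` for every permutation `(j,k,l)` of `(1,2,3)`,
and `ad − bc = 1`, then `Ã_j(ν) = (cμ+d)² A_j(μ) + c(cμ+d)` with `μ = (dν−b)/(a−cν)`
(so that `ν = (aμ+b)/(cμ+d)` and `cμ+d = 1/(a−cν)`) solve the same system in `ν`,
wherever `a − cν ≠ 0`. -/
theorem halphen_moebius_covariance
    (A : Fin 3 → ℝ → ℝ)
    (hA : ∀ j k l : Fin 3, j ≠ k → k ≠ l → j ≠ l → ∀ μ : ℝ,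
      HasDerivAt (A j) (-(A k μ * A l μ) + A j μ * (A k μ + A l μ)) μ)
    (a b c d : ℝ) (habcd : a * d - b * c = 1)
    (B : Fin 3 → ℝ → ℝ)
    (hB : ∀ j (ν : ℝ),
      B j ν = A j ((d * ν - b) / (a - c * ν)) / (a - c * ν) ^ 2 + c / (a - c * ν)) :
    ∀ j k l : Fin 3, j ≠ k → k ≠ l → j ≠ l → ∀ ν : ℝ, a - c * ν ≠ 0 →
      HasDerivAt (B j) (-(B k ν * B l ν) + B j ν * (B k ν + B l ν)) ν := by
  intro j k l hjk hkl hjl ν hs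
  set μ : ℝ := (d * ν - b) / (a - c * ν) with hμdef
  have hBj : B j = fun ν => A j ((d * ν - b) / (a - c * ν)) / (a - c * ν) ^ 2
      + c / (a - c * ν) := funext (hB j)
  have hden : HasDerivAt (fun ν : ℝ => a - c * ν) (-c) ν := by
    simpa using ((hasDerivAt_id ν).const_mul c).const_sub a
  have hnum : HasDerivAt (fun ν : ℝ => d * ν - b) d ν := by
    simpa using ((hasDerivAt_id ν).const_mul d).sub_const b
  have hm : HasDerivAt (fun ν : ℝ => (d * ν - b) / (a - c * ν))
      ((d * (a - c * ν) - (d * ν - b) * (-c)) / (a - c * ν) ^ 2) ν := hnum.div hden hs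
  have hAj := hA j k l hjk hkl hjl μ
  have hcomp : HasDerivAt (fun ν : ℝ => A j ((d * ν - b) / (a - c * ν)))
      ((-(A k μ * A l μ) + A j μ * (A k μ + A l μ)) *
        ((d * (a - c * ν) - (d * ν - b) * (-c)) / (a - c * ν) ^ 2)) ν :=
    hAj.comp ν hm
  have hpow : HasDerivAt (fun ν : ℝ => (a - c * ν) ^ 2)
      (2 * (a - c * ν) ^ 1 * (-c)) ν := hden.pow 2
  have h1 := hcomp.div hpow (pow_ne_zero 2 hs)
  have h2 := (hasDerivAt_const ν c).div hden hs
  have hder := h1.add h2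
  rw [hBj]
  refine hder.congr_deriv ?_
  symm
  rw [hB k ν, hB l ν]
  simp only []
  have had : d * (a - c * ν) - (d * ν - b) * (-c) = 1 := by ring_nf; linarith [habcd]
  rw [had]
  rw [← hμdef]
  field_simp
  ring
end

section
/- Let (A_1,A_2,A_3) solve the Halphen system dA_j/dμ = −A_k A_l + A_j(A_k+A_l), and let (W_1,W_2,W_3) solve dW_j/dμ = −W_k W_l + W_j(A_k + A_l) for every permutation (j,k,l) of (1,2,3). For constants a,b,c,d with ad−bc = 1 and μ̃ = (aμ+b)/(cμ+d), define Ã_j(μ̃) = (cμ+d)²A_j(μ) + c(cμ+d) and W̃_j(μ̃) = (cμ+d)²W_j(μ). Then dW̃_j/dμ̃ = −W̃_k W̃_l + W̃_j(Ã_k + Ã_l). -/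
/-- Möbius covariance of the coupled system for SU(2)-invariant self-dual Einstein
metrics: if `(A_j)` solve the Halphen system and `(W_j)` solve
`dW_j/dμ = −W_k W_l + W_j(A_k + A_l)`, then with `μ = (dν−b)/(a−cν)` (i.e.
`ν = (aμ+b)/(cμ+d)`, `ad−bc = 1`, `cμ+d = 1/(a−cν)`), the transformed functions
`Ã_j(ν) = (cμ+d)²A_j(μ) + c(cμ+d)` and `W̃_j(ν) = (cμ+d)²W_j(μ)` satisfy
`dW̃_j/dν = −W̃_k W̃_l + W̃_j(Ã_k + Ã_l)` wherever `a − cν ≠ 0`. -/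
theorem einstein_system_moebius_covariance
    (A W : Fin 3 → ℝ → ℝ)
    (hA : ∀ j k l : Fin 3, j ≠ k → k ≠ l → j ≠ l → ∀ μ : ℝ,
      HasDerivAt (A j) (-(A k μ * A l μ) + A j μ * (A k μ + A l μ)) μ)
    (hW : ∀ j k l : Fin 3, j ≠ k → k ≠ l → j ≠ l → ∀ μ : ℝ,
      HasDerivAt (W j) (-(W k μ * W l μ) + W j μ * (A k μ + A l μ)) μ)
    (a b c d : ℝ) (habcd : a * d - b * c = 1)
    (B V : Fin 3 → ℝ → ℝ)
    (hB : ∀ j (ν : ℝ),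
      B j ν = A j ((d * ν - b) / (a - c * ν)) / (a - c * ν) ^ 2 + c / (a - c * ν))
    (hV : ∀ j (ν : ℝ),
      V j ν = W j ((d * ν - b) / (a - c * ν)) / (a - c * ν) ^ 2) :
    ∀ j k l : Fin 3, j ≠ k → k ≠ l → j ≠ l → ∀ ν : ℝ, a - c * ν ≠ 0 →
      HasDerivAt (V j) (-(V k ν * V l ν) + V j ν * (B k ν + B l ν)) ν := by
  intro j k l hjk hkl hjl ν hs
  have hs2 : (a - c * ν) ^ 2 ≠ 0 := pow_ne_zero _ hs
  have hkey : d * (a - c * ν) - (d * ν - b) * (-c) = 1 := by linear_combination habcd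
  have h1 : HasDerivAt (fun ν : ℝ => d * ν - b) d ν := by
    simpa using ((hasDerivAt_id ν).const_mul d).sub_const b
  have h2 : HasDerivAt (fun ν : ℝ => a - c * ν) (-c) ν := by
    simpa using (((hasDerivAt_id ν).const_mul c).const_sub a)
  have hm : HasDerivAt (fun ν : ℝ => (d * ν - b) / (a - c * ν))
      (1 / (a - c * ν) ^ 2) ν := by
    have := h1.div h2 hs
    rwa [hkey] at this
  have hWj := hW j k l hjk hkl hjl ((d * ν - b) / (a - c * ν))
  have hcomp : HasDerivAt (fun ν : ℝ => W j ((d * ν - b) / (a - c * ν)))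
      ((-(W k ((d * ν - b) / (a - c * ν)) * W l ((d * ν - b) / (a - c * ν))) +
        W j ((d * ν - b) / (a - c * ν)) *
          (A k ((d * ν - b) / (a - c * ν)) + A l ((d * ν - b) / (a - c * ν)))) *
        (1 / (a - c * ν) ^ 2)) ν :=
    HasDerivAt.comp ν hWj hm
  have hsq : HasDerivAt (fun ν : ℝ => (a - c * ν) ^ 2)
      ((2 : ℕ) * (a - c * ν) ^ 1 * (-c)) ν := h2.pow 2
  have hder := hcomp.div hsq hs2
  have hVfun : V j = fun ν : ℝ => W j ((d * ν - b) / (a - c * ν)) / (a - c * ν) ^ 2 :=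
    funext (hV j)
  rw [hV k, hV l, hV j, hB k, hB l, hVfun]
  refine hder.congr_deriv ?_
  generalize W j ((d * ν - b) / (a - c * ν)) = wj
  generalize W k ((d * ν - b) / (a - c * ν)) = wk
  generalize W l ((d * ν - b) / (a - c * ν)) = wl
  generalize A k ((d * ν - b) / (a - c * ν)) = ak
  generalize A l ((d * ν - b) / (a - c * ν)) = al
  have hs' := hs
  revert hs'
  generalize (a - c * ν) = s
  intro hs'
  field_simp
  ring
end

section
/- Let θ_2, θ_3, θ_4 be differentiable, nowhere-vanishing functions of μ on an interval, satisfying the Jacobi identity θ_3⁴ = θ_2⁴ + θ_4⁴. Let (W_1,W_2,W_3) solve dW_1/dμ = −W_2W_3 + 2W_1 (d/dμ)ln(θ_3θ_4), dW_2/dμ = −W_3W_1 + 2W_2 (d/dμ)ln(θ_2θ_4), dW_3/dμ = −W_1W_2 + 2W_3 (d/dμ)ln(θ_2θ_3). Then the quantity (θ_2⁴W_1² − θ_3⁴W_2² + θ_4⁴W_3²) / (θ_2θ_3θ_4)⁴ is constant in μ. -/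
/-- Integral of motion of the system `W₁' = −W₂W₃ + 2W₁ (ln(θ₃θ₄))'`,
`W₂' = −W₃W₁ + 2W₂ (ln(θ₂θ₄))'`, `W₃' = −W₁W₂ + 2W₃ (ln(θ₂θ₃))'`, where
`θ₂, θ₃, θ₄` are differentiable, nowhere-vanishing and satisfy the Jacobi identity
`θ₃⁴ = θ₂⁴ + θ₄⁴`: the quantity
`(θ₂⁴W₁² − θ₃⁴W₂² + θ₄⁴W₃²)/(θ₂θ₃θ₄)⁴` is constant. -/
theorem theta_system_integral
    (a b : ℝ) (θ₂ θ₃ θ₄ t₂ t₃ t₄ W₁ W₂ W₃ : ℝ → ℝ)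
    (hθ2 : ∀ μ ∈ Set.Ioo a b, HasDerivAt θ₂ (t₂ μ) μ)
    (hθ3 : ∀ μ ∈ Set.Ioo a b, HasDerivAt θ₃ (t₃ μ) μ)
    (hθ4 : ∀ μ ∈ Set.Ioo a b, HasDerivAt θ₄ (t₄ μ) μ)
    (hnz : ∀ μ ∈ Set.Ioo a b, θ₂ μ ≠ 0 ∧ θ₃ μ ≠ 0 ∧ θ₄ μ ≠ 0)
    (hJacobi : ∀ μ ∈ Set.Ioo a b, θ₃ μ ^ 4 = θ₂ μ ^ 4 + θ₄ μ ^ 4)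
    (hW1 : ∀ μ ∈ Set.Ioo a b,
      HasDerivAt W₁ (-(W₂ μ * W₃ μ) + 2 * W₁ μ * (t₃ μ / θ₃ μ + t₄ μ / θ₄ μ)) μ)
    (hW2 : ∀ μ ∈ Set.Ioo a b,
      HasDerivAt W₂ (-(W₃ μ * W₁ μ) + 2 * W₂ μ * (t₂ μ / θ₂ μ + t₄ μ / θ₄ μ)) μ)
    (hW3 : ∀ μ ∈ Set.Ioo a b,
      HasDerivAt W₃ (-(W₁ μ * W₂ μ) + 2 * W₃ μ * (t₂ μ / θ₂ μ + t₃ μ / θ₃ μ)) μ) :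
    ∀ μ ∈ Set.Ioo a b, ∀ ν ∈ Set.Ioo a b,
      (θ₂ μ ^ 4 * W₁ μ ^ 2 - θ₃ μ ^ 4 * W₂ μ ^ 2 + θ₄ μ ^ 4 * W₃ μ ^ 2)
          / (θ₂ μ * θ₃ μ * θ₄ μ) ^ 4
        = (θ₂ ν ^ 4 * W₁ ν ^ 2 - θ₃ ν ^ 4 * W₂ ν ^ 2 + θ₄ ν ^ 4 * W₃ ν ^ 2)
          / (θ₂ ν * θ₃ ν * θ₄ ν) ^ 4 := by
  set s := Set.Ioo a b with hs
  set F : ℝ → ℝ := fun μ =>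
    (θ₂ μ ^ 4 * W₁ μ ^ 2 - θ₃ μ ^ 4 * W₂ μ ^ 2 + θ₄ μ ^ 4 * W₃ μ ^ 2)
      / (θ₂ μ * θ₃ μ * θ₄ μ) ^ 4 with hF
  have key : ∀ μ ∈ s, HasDerivAt F 0 μ := by
    intro μ hμ
    obtain ⟨h2, h3, h4⟩ := hnz μ hμ
    have hJ := hJacobi μ hμ
    have hNum : HasDerivAt
        (fun μ => θ₂ μ ^ 4 * W₁ μ ^ 2 - θ₃ μ ^ 4 * W₂ μ ^ 2 + θ₄ μ ^ 4 * W₃ μ ^ 2)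
        ((4 * θ₂ μ ^ 3 * t₂ μ) * W₁ μ ^ 2
          + θ₂ μ ^ 4 * (2 * W₁ μ * (-(W₂ μ * W₃ μ) + 2 * W₁ μ * (t₃ μ / θ₃ μ + t₄ μ / θ₄ μ)))
          - ((4 * θ₃ μ ^ 3 * t₃ μ) * W₂ μ ^ 2
            + θ₃ μ ^ 4 * (2 * W₂ μ * (-(W₃ μ * W₁ μ) + 2 * W₂ μ * (t₂ μ / θ₂ μ + t₄ μ / θ₄ μ))))
          + ((4 * θ₄ μ ^ 3 * t₄ μ) * W₃ μ ^ 2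
            + θ₄ μ ^ 4 * (2 * W₃ μ * (-(W₁ μ * W₂ μ) + 2 * W₃ μ * (t₂ μ / θ₂ μ + t₃ μ / θ₃ μ))))) μ := by
      have e2 : HasDerivAt (fun μ => θ₂ μ ^ 4) (4 * θ₂ μ ^ 3 * t₂ μ) μ := by
        simpa [mul_comm, mul_assoc, mul_left_comm] using (hθ2 μ hμ).fun_pow 4
      have e3 : HasDerivAt (fun μ => θ₃ μ ^ 4) (4 * θ₃ μ ^ 3 * t₃ μ) μ := by
        simpa [mul_comm, mul_assoc, mul_left_comm] using (hθ3 μ hμ).fun_pow 4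
      have e4 : HasDerivAt (fun μ => θ₄ μ ^ 4) (4 * θ₄ μ ^ 3 * t₄ μ) μ := by
        simpa [mul_comm, mul_assoc, mul_left_comm] using (hθ4 μ hμ).fun_pow 4
      have w1 : HasDerivAt (fun μ => W₁ μ ^ 2)
          (2 * W₁ μ * (-(W₂ μ * W₃ μ) + 2 * W₁ μ * (t₃ μ / θ₃ μ + t₄ μ / θ₄ μ))) μ := by
        simpa [mul_comm, mul_assoc, mul_left_comm] using (hW1 μ hμ).fun_pow 2
      have w2 : HasDerivAt (fun μ => W₂ μ ^ 2)
          (2 * W₂ μ * (-(W₃ μ * W₁ μ) + 2 * W₂ μ * (t₂ μ / θ₂ μ + t₄ μ / θ₄ μ))) μ := by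
        simpa [mul_comm, mul_assoc, mul_left_comm] using (hW2 μ hμ).fun_pow 2
      have w3 : HasDerivAt (fun μ => W₃ μ ^ 2)
          (2 * W₃ μ * (-(W₁ μ * W₂ μ) + 2 * W₃ μ * (t₂ μ / θ₂ μ + t₃ μ / θ₃ μ))) μ := by
        simpa [mul_comm, mul_assoc, mul_left_comm] using (hW3 μ hμ).fun_pow 2
      exact ((e2.mul w1).sub (e3.mul w2)).add (e4.mul w3)
    have hDen : HasDerivAt (fun μ => (θ₂ μ * θ₃ μ * θ₄ μ) ^ 4)
        (4 * (θ₂ μ * θ₃ μ * θ₄ μ) ^ 3 *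
          (t₂ μ * θ₃ μ * θ₄ μ + θ₂ μ * t₃ μ * θ₄ μ + θ₂ μ * θ₃ μ * t₄ μ)) μ := by
      have : HasDerivAt (fun μ => θ₂ μ * θ₃ μ * θ₄ μ)
          (t₂ μ * θ₃ μ * θ₄ μ + θ₂ μ * t₃ μ * θ₄ μ + θ₂ μ * θ₃ μ * t₄ μ) μ := by
        have := ((hθ2 μ hμ).fun_mul (hθ3 μ hμ)).fun_mul (hθ4 μ hμ)
        refine this.congr_deriv (Eq.symm ?_); ring
      simpa [mul_comm, mul_assoc, mul_left_comm] using this.fun_pow 4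
    have hdnz : (θ₂ μ * θ₃ μ * θ₄ μ) ^ 4 ≠ 0 := by positivity
    have hdiv := hNum.fun_div hDen hdnz
    refine hdiv.congr_deriv (Eq.symm ?_)
    have h34 : θ₃ μ ^ 4 = θ₂ μ ^ 4 + θ₄ μ ^ 4 := hJ
    field_simp
    linear_combination (-2 * θ₂ μ * θ₃ μ * θ₄ μ * W₁ μ * W₂ μ * W₃ μ) * h34
  intro μ hμ ν hν
  have hconv : Convex ℝ s := convex_Ioo a b
  have hdiff : DifferentiableOn ℝ F s := fun x hx => (key x hx).differentiableAt.differentiableWithinAt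
  refine hconv.is_const_of_fderivWithin_eq_zero hdiff (fun x hx => ?_) hμ hν
  have hu : UniqueDiffWithinAt ℝ s x := isOpen_Ioo.uniqueDiffWithinAt hx
  rw [((key x hx).hasFDerivAt.hasFDerivWithinAt).fderivWithin hu]
  ext
  simp
end
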